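/- For every C ⊆ S, the motif cut of C in G (the number of occurrences in M with at least one vertex in C and at least one vertex in V ∖ C) equals the cut-net cut(C) of C in the hypergraph model H_μ. -/

import Mathlib

namespace Stmt4

variable {V ι : Type*} [Fintype V] [DecidableEq V] [DecidableEq ι]

/-- motif degree `d_μ(v)` : the number of occurrences containing `v`. -/
def dmu (M : Finset ι) (occ : ι → Finset V) (v : V) : ℕ :=
  (M.filter (fun i => v ∈ occ i)).card

/-- motif volume `d_μ(C)`. -/
def dmuS (M : Finset ι) (occ : ι → Finset V) (C : Finset V) : ℕ :=
  ∑ v ∈ C, dmu M occ v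

/-- motif cut of `C` : the number of occurrences containing at least one vertex
of `C` and at least one vertex of `V \ C`. -/
def motifCut (M : Finset ι) (occ : ι → Finset V) (C : Finset V) : ℕ :=
  (M.filter (fun i =>
    (occ i ∩ C).Nonempty ∧ (occ i ∩ (Finset.univ \ C)).Nonempty)).card

/-- motif conductance `φ_μ(C)` as a real number. -/
noncomputable def phi (M : Finset ι) (occ : ι → Finset V) (C : Finset V) : ℝ :=
  (motifCut M occ C : ℝ) /
    min (dmuS M occ C : ℝ) (dmuS M occ (Finset.univ \ C) : ℝ)

/-- The net of the hypergraph model `H_μ` corresponding to the occurrence `i`: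
the node set of `H_μ` is `S ∪ {r}`, encoded as `Option V` with `r = none`. -/
def hnet (S : Finset V) (occ : ι → Finset V) (i : ι) : Finset (Option V) :=
  if occ i ⊆ S then (occ i).image some
  else insert none ((occ i ∩ S).image some)

/-- weighted degree in `H_μ` (all nets have weight 1). -/
def hdw (M : Finset ι) (S : Finset V) (occ : ι → Finset V) (x : Option V) : ℕ :=
  (M.filter (fun i => x ∈ hnet S occ i)).card

/-- weighted volume in `H_μ`. -/
def hdwS (M : Finset ι) (S : Finset V) (occ : ι → Finset V)
    (C : Finset (Option V)) : ℕ :=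
  ∑ x ∈ C, hdw M S occ x

/-- cut-net of `C ⊆ S ∪ {r}` in `H_μ`. -/
def hcut (M : Finset ι) (S : Finset V) (occ : ι → Finset V)
    (C : Finset (Option V)) : ℕ :=
  (M.filter (fun i => (hnet S occ i ∩ C).Nonempty ∧
    (hnet S occ i ∩ (insert none (S.image some) \ C)).Nonempty)).card

/-- For every `C ⊆ S`, the motif cut of `C` in `G` equals the cut-net of
`C` in the hypergraph model `H_μ`. -/
theorem motif_cut_eq_cut_net
    (G : SimpleGraph V) (M : Finset ι) (occ : ι → Finset V) (S : Finset V) :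
    ∀ C : Finset V, C ⊆ S →
      motifCut M occ C = hcut M S occ (C.image some) := by
  intro C hCS
  unfold motifCut hcut
  congr 1
  apply Finset.filter_congr
  intro i _
  unfold hnet
  by_cases h : occ i ⊆ S
  · simp only [if_pos h, Finset.Nonempty, Finset.mem_inter, Finset.mem_image,
      Finset.mem_sdiff, Finset.mem_insert, Finset.mem_univ, true_and]
    constructor
    · rintro ⟨⟨x, hx, hxC⟩, ⟨y, hy, hyC⟩⟩
      refine ⟨⟨some x, ⟨x, hx, rfl⟩, ⟨x, hxC, rfl⟩⟩,
        ⟨some y, ⟨y, hy, rfl⟩, Or.inr ⟨y, h hy, rfl⟩, ?_⟩⟩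
      rintro ⟨z, hz, hzeq⟩
      exact hyC (Option.some_injective _ hzeq ▸ hz)
    · rintro ⟨⟨x, ⟨a, ha, rfl⟩, ⟨b, hb, hba⟩⟩, ⟨y, ⟨c, hc, rfl⟩, _, hy2⟩⟩
      refine ⟨⟨a, ha, (Option.some_injective _ hba ▸ hb)⟩, ⟨c, hc, ?_⟩⟩
      intro hcC
      exact hy2 ⟨c, hcC, rfl⟩
  · obtain ⟨w, hw, hwS⟩ := Finset.not_subset.mp h
    simp only [if_neg h, Finset.Nonempty, Finset.mem_inter, Finset.mem_image,
      Finset.mem_sdiff, Finset.mem_insert, Finset.mem_univ, true_and]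
    constructor
    · rintro ⟨⟨x, hx, hxC⟩, _⟩
      refine ⟨⟨some x, Or.inr ⟨x, ⟨hx, hCS hxC⟩, rfl⟩, ⟨x, hxC, rfl⟩⟩,
        ⟨none, Or.inl rfl, Or.inl rfl, ?_⟩⟩
      rintro ⟨z, _, hz⟩; exact Option.some_ne_none _ hz
    · rintro ⟨⟨x, hx1, ⟨b, hb, rfl⟩⟩, _⟩
      rcases hx1 with h0 | ⟨a, ⟨ha, _⟩, hab⟩
      · exact (Option.some_ne_none _ h0).elim
      · refine ⟨⟨a, ha, Option.some_injective _ hab ▸ hb⟩,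
          ⟨w, hw, fun hwC => hwS (hCS hwC)⟩⟩

end Stmt4
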